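/- The union operation on closed types of the same shape is well-defined and is a least upper bound with respect to subtyping: for closed types A₁, A₂ of the same shape, A₁ ≤ A₁ ∪ A₂, A₂ ≤ A₁ ∪ A₂, and whenever A₁ ≤ B and A₂ ≤ B then A₁ ∪ A₂ ≤ B. Dually, intersection is a greatest lower bound. -/
import Mathlib


/-- Operations are pairs (instance, operation symbol). -/
abbrev Operation := ℕ × ℕ
/-- A dirt is a finite set of operations. -/
abbrev Dirt := Finset Operation
/-- A region is a finite set of instances. -/
abbrev Region := Finset ℕ

/-- Closed core Eff types: ground types, function types `A → (B ! Δ)`,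
effect types `E^R` and handler types `(A ! Δ₁) ⇒ (B ! Δ₂)`. -/
inductive Ty : Type where
  | bool : Ty
  | nat : Ty
  | unit : Ty
  | empty : Ty
  | fn : Ty → Ty → Dirt → Ty
  | eff : ℕ → Region → Ty
  | hand : Ty → Dirt → Ty → Dirt → Ty
  deriving DecidableEq

/-- Dirty types `A ! Δ`. -/
abbrev DirtyTy := Ty × Dirt

/-- Structural subtyping on core Eff types. -/
inductive SubTy : Ty → Ty → Prop where
  | bool : SubTy .bool .bool
  | nat : SubTy .nat .nat
  | unit : SubTy .unit .unit
  | empty : SubTy .empty .empty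
  | fn {A A' B B' : Ty} {Δ Δ' : Dirt} :
      SubTy A' A → SubTy B B' → Δ ⊆ Δ' → SubTy (.fn A B Δ) (.fn A' B' Δ')
  | eff {E : ℕ} {R R' : Region} : R ⊆ R' → SubTy (.eff E R) (.eff E R')
  | hand {A A' B B' : Ty} {Δ₁ Δ₁' Δ₂ Δ₂' : Dirt} :
      SubTy A' A → Δ₁' ⊆ Δ₁ → SubTy B B' → Δ₂ ⊆ Δ₂' →
      SubTy (.hand A Δ₁ B Δ₂) (.hand A' Δ₁' B' Δ₂')

/-- Subtyping of dirty types: `A ! Δ ≤ A' ! Δ'` iff `A ≤ A'` and `Δ ⊆ Δ'`. -/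
def SubD (C C' : DirtyTy) : Prop := SubTy C.1 C'.1 ∧ C.2 ⊆ C'.2

/-- Two types have the same shape iff they differ only in regions and dirts. -/
def SameShape : Ty → Ty → Prop
  | .bool, .bool => True
  | .nat, .nat => True
  | .unit, .unit => True
  | .empty, .empty => True
  | .fn A B _, .fn A' B' _ => SameShape A A' ∧ SameShape B B'
  | .eff E _, .eff E' _ => E = E'
  | .hand A _ B _, .hand A' _ B' _ => SameShape A A' ∧ SameShape B B'
  | _, _ => False

mutual
/-- Union of two closed types of the same shape (junk on mismatched shapes). -/
def tyUnion : Ty → Ty → Ty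
  | .fn A B Δ, .fn A' B' Δ' => .fn (tyInter A A') (tyUnion B B') (Δ ∪ Δ')
  | .eff E R, .eff _ R' => .eff E (R ∪ R')
  | .hand A Δ₁ B Δ₂, .hand A' Δ₁' B' Δ₂' =>
      .hand (tyInter A A') (Δ₁ ∩ Δ₁') (tyUnion B B') (Δ₂ ∪ Δ₂')
  | A, _ => A
/-- Intersection of two closed types of the same shape (junk on mismatched shapes). -/
def tyInter : Ty → Ty → Ty
  | .fn A B Δ, .fn A' B' Δ' => .fn (tyUnion A A') (tyInter B B') (Δ ∩ Δ')
  | .eff E R, .eff _ R' => .eff E (R ∩ R')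
  | .hand A Δ₁ B Δ₂, .hand A' Δ₁' B' Δ₂' =>
      .hand (tyUnion A A') (Δ₁ ∪ Δ₁') (tyInter B B') (Δ₂ ∩ Δ₂')
  | A, _ => A
end

/-- For closed types of the same shape, the union is a least upper bound and the
intersection is a greatest lower bound with respect to structural subtyping. -/
theorem tyUnion_lub_tyInter_glb (A₁ A₂ : Ty) (h : SameShape A₁ A₂) :
    SubTy A₁ (tyUnion A₁ A₂) ∧ SubTy A₂ (tyUnion A₁ A₂) ∧
    (∀ B : Ty, SubTy A₁ B → SubTy A₂ B → SubTy (tyUnion A₁ A₂) B) ∧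
    SubTy (tyInter A₁ A₂) A₁ ∧ SubTy (tyInter A₁ A₂) A₂ ∧
    (∀ B : Ty, SubTy B A₁ → SubTy B A₂ → SubTy B (tyInter A₁ A₂)) := by
  induction A₁ generalizing A₂ with
  | bool => cases A₂ <;> simp only [SameShape] at h <;>
      exact ⟨.bool, .bool, fun _ h1 _ => h1, .bool, .bool, fun _ h1 _ => h1⟩
  | nat => cases A₂ <;> simp only [SameShape] at h <;>
      exact ⟨.nat, .nat, fun _ h1 _ => h1, .nat, .nat, fun _ h1 _ => h1⟩
  | unit => cases A₂ <;> simp only [SameShape] at h <;>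
      exact ⟨.unit, .unit, fun _ h1 _ => h1, .unit, .unit, fun _ h1 _ => h1⟩
  | empty => cases A₂ <;> simp only [SameShape] at h <;>
      exact ⟨.empty, .empty, fun _ h1 _ => h1, .empty, .empty, fun _ h1 _ => h1⟩
  | eff E R =>
      cases A₂ with
      | eff E' R' =>
          simp only [SameShape] at h; subst h
          refine ⟨.eff ?_, .eff ?_, ?_, .eff ?_, .eff ?_, ?_⟩
          · exact Finset.subset_union_left
          · exact Finset.subset_union_right
          · intro B h1 h2; cases h1; cases h2
            exact .eff (Finset.union_subset ‹_› ‹_›)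
          · exact Finset.inter_subset_left
          · exact Finset.inter_subset_right
          · intro B h1 h2; cases h1; cases h2
            exact .eff (Finset.subset_inter ‹_› ‹_›)
      | _ => simp [SameShape] at h
  | fn A B Δ ihA ihB =>
      cases A₂ with
      | fn A' B' Δ' =>
          obtain ⟨hA, hB⟩ := h
          obtain ⟨uA1, uA2, uAl, iA1, iA2, iAg⟩ := ihA A' hA
          obtain ⟨uB1, uB2, uBl, iB1, iB2, iBg⟩ := ihB B' hB
          refine ⟨.fn iA1 uB1 Finset.subset_union_left,
                  .fn iA2 uB2 Finset.subset_union_right, ?_,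
                  .fn uA1 iB1 Finset.inter_subset_left,
                  .fn uA2 iB2 Finset.inter_subset_right, ?_⟩
          · intro C h1 h2
            cases h1 with
            | fn ha1 hb1 hd1 =>
              cases h2 with
              | fn ha2 hb2 hd2 =>
                exact .fn (iAg _ ha1 ha2) (uBl _ hb1 hb2)
                  (Finset.union_subset hd1 hd2)
          · intro C h1 h2
            cases h1 with
            | fn ha1 hb1 hd1 =>
              cases h2 with
              | fn ha2 hb2 hd2 =>
                exact .fn (uAl _ ha1 ha2) (iBg _ hb1 hb2)
                  (Finset.subset_inter hd1 hd2)
      | _ => simp [SameShape] at h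
  | hand A Δ₁ B Δ₂ ihA ihB =>
      cases A₂ with
      | hand A' Δ₁' B' Δ₂' =>
          obtain ⟨hA, hB⟩ := h
          obtain ⟨uA1, uA2, uAl, iA1, iA2, iAg⟩ := ihA A' hA
          obtain ⟨uB1, uB2, uBl, iB1, iB2, iBg⟩ := ihB B' hB
          refine ⟨.hand iA1 Finset.inter_subset_left uB1 Finset.subset_union_left,
                  .hand iA2 Finset.inter_subset_right uB2 Finset.subset_union_right, ?_,
                  .hand uA1 Finset.subset_union_left iB1 Finset.inter_subset_left,
                  .hand uA2 Finset.subset_union_right iB2 Finset.inter_subset_right, ?_⟩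
          · intro C h1 h2
            cases h1 with
            | hand ha1 hd1 hb1 he1 =>
              cases h2 with
              | hand ha2 hd2 hb2 he2 =>
                exact .hand (iAg _ ha1 ha2) (Finset.subset_inter hd1 hd2)
                  (uBl _ hb1 hb2) (Finset.union_subset he1 he2)
          · intro C h1 h2
            cases h1 with
            | hand ha1 hd1 hb1 he1 =>
              cases h2 with
              | hand ha2 hd2 hb2 he2 =>
                exact .hand (uAl _ ha1 ha2) (Finset.union_subset hd1 hd2)
                  (iBg _ hb1 hb2) (Finset.subset_inter he1 he2)
      | _ => simp [SameShape] at h
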